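/- Let A and B be linear cyclic codes over F_q with parameters [n_a, k_a, d_a] and [n_b, k_b, d_b] respectively, where gcd(n_a, n_b) = 1. Then the product code A ⊗ B, serialized by the Chinese-remainder ordering, is a linear cyclic code over F_q of length n_a·n_b, dimension k_a·k_b, and minimum Hamming distance d_a·d_b. -/

import Mathlib

private lemma modSubOne {m N : ℕ} (hm : 0 < m) (hN : 0 < N) (hd : m ∣ N) (x : ℕ) :
    ((N - 1 % N + x) % N) % m = (m - 1 % m + x % m) % m := by
  obtain ⟨k, rfl⟩ := hd
  rw [Nat.mod_mod_of_dvd _ (dvd_mul_right m k)]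
  have hm' : 1 ≤ m := hm
  rcases eq_or_lt_of_le hm' with h1 | h2
  · simp [← h1, Nat.mod_one]
  · have hk : 0 < k := by
      rcases Nat.eq_zero_or_pos k with h | h
      · subst h; simp at hN
      · exact h
    obtain ⟨k', rfl⟩ : ∃ k', k = k' + 1 := ⟨k - 1, by omega⟩
    have hq : m * (k' + 1 - 1) + m = m * (k' + 1) := by simp; ring
    have hle : m ≤ m * (k' + 1) := Nat.le_mul_of_pos_right m hk
    have h1N : 1 % (m * (k' + 1)) = 1 := Nat.mod_eq_of_lt (lt_of_lt_of_le h2 hle)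
    have h1m : 1 % m = 1 := Nat.mod_eq_of_lt h2
    rw [h1N, h1m]
    have hsplit : m * (k' + 1) - 1 + x = m - 1 + x + m * (k' + 1 - 1) := by
      set P := m * (k' + 1); set Q := m * (k' + 1 - 1); omega
    rw [hsplit, Nat.add_mul_mod_self_left, Nat.add_mod (m-1) x m,
        Nat.add_mod (m-1) (x % m) m, Nat.mod_mod_of_dvd x dvd_rfl]

private lemma finSubOne {m N : ℕ} [NeZero m] [NeZero N] (hd : m ∣ N) (ℓ : Fin N) (i : Fin m)
    (hi : (i : ℕ) = (ℓ : ℕ) % m) :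
    (((ℓ - 1 : Fin N) : ℕ) % m) = ((i - 1 : Fin m) : ℕ) := by
  have h1 : ((ℓ - 1 : Fin N) : ℕ) = (N - 1 % N + (ℓ : ℕ)) % N := by
    rw [Fin.sub_def]; simp [Fin.val_one']
  have h2 : ((i - 1 : Fin m) : ℕ) = (m - 1 % m + (i : ℕ)) % m := by
    rw [Fin.sub_def]; simp [Fin.val_one']
  rw [h1, h2, hi]
  exact modSubOne (Nat.pos_of_ne_zero (NeZero.ne m)) (Nat.pos_of_ne_zero (NeZero.ne N)) hd ℓ

/-- **Cyclic product codes (Burton–Weldon).**  Let `A` and `B` be linear cyclic codes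
over `F_q` with parameters `[n_a, k_a, d_a]` and `[n_b, k_b, d_b]`, where
`gcd(n_a, n_b) = 1`.  Then the product code `A ⊗ B`, serialized by the
Chinese-remainder ordering `ℓ ↦ (ℓ mod n_a, ℓ mod n_b)`, is a linear cyclic code over
`F_q` of length `n_a n_b`, dimension `k_a k_b` and minimum Hamming distance `d_a d_b`. -/
theorem cyclic_product_code
    {F : Type*} [Field F] [Fintype F] [DecidableEq F]
    (na nb ka kb da db : ℕ) [NeZero na] [NeZero nb]
    (hna : 0 < na) (hnb : 0 < nb)
    (hcop : Nat.Coprime na nb)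
    (A : Submodule F (Fin na → F)) (B : Submodule F (Fin nb → F))
    (hAcyc : ∀ c ∈ A, (fun i : Fin na => c (i - 1)) ∈ A)
    (hBcyc : ∀ c ∈ B, (fun i : Fin nb => c (i - 1)) ∈ B)
    (hAdim : Module.finrank F A = ka) (hBdim : Module.finrank F B = kb)
    (hAdist : IsLeast {w | ∃ c : Fin na → F, c ∈ A ∧ c ≠ 0 ∧ w = hammingNorm c} da)
    (hBdist : IsLeast {w | ∃ c : Fin nb → F, c ∈ B ∧ c ≠ 0 ∧ w = hammingNorm c} db) :
    ∃ P : Submodule F (Fin (na * nb) → F),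
      (∀ w : Fin (na * nb) → F, w ∈ P ↔
        ∃ M : Fin na → Fin nb → F,
          (∀ j : Fin nb, (fun i => M i j) ∈ A) ∧
          (∀ i : Fin na, (fun j => M i j) ∈ B) ∧
          ∀ ℓ : Fin (na * nb),
            w ℓ = M ⟨(ℓ : ℕ) % na, Nat.mod_lt _ hna⟩ ⟨(ℓ : ℕ) % nb, Nat.mod_lt _ hnb⟩) ∧
      (∀ w ∈ P, (fun ℓ : Fin (na * nb) => w (ℓ - 1)) ∈ P) ∧
      Module.finrank F P = ka * kb ∧
      IsLeast {w | ∃ c : Fin (na * nb) → F, c ∈ P ∧ c ≠ 0 ∧ w = hammingNorm c}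
        (da * db) := by
  classical
  have hNpos : 0 < na * nb := Nat.mul_pos hna hnb
  haveI : NeZero (na * nb) := ⟨hNpos.ne'⟩
  -- the CRT map
  set π : Fin (na * nb) → Fin na × Fin nb := fun ℓ =>
    (⟨(ℓ : ℕ) % na, Nat.mod_lt _ hna⟩, ⟨(ℓ : ℕ) % nb, Nat.mod_lt _ hnb⟩) with hπ
  have πinj : Function.Injective π := by
    intro x y h
    simp only [hπ, Prod.mk.injEq, Fin.mk.injEq] at h
    have hmod : (x : ℕ) % (na * nb) = (y : ℕ) % (na * nb) :=
      (Nat.modEq_and_modEq_iff_modEq_mul hcop).1 ⟨h.1, h.2⟩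
    rwa [Nat.mod_eq_of_lt x.2, Nat.mod_eq_of_lt y.2, ← Fin.ext_iff] at hmod
  have πbij : Function.Bijective π :=
    (Fintype.bijective_iff_injective_and_card π).2 ⟨πinj, by simp⟩
  set e : Fin (na * nb) ≃ Fin na × Fin nb := Equiv.ofBijective π πbij with he
  have he_apply : ∀ ℓ, e ℓ = π ℓ := fun ℓ => rfl
  -- serialization
  set T : (Fin na → Fin nb → F) →ₗ[F] (Fin (na * nb) → F) :=
    { toFun := fun M ℓ => M (π ℓ).1 (π ℓ).2
      map_add' := fun _ _ => rfl
      map_smul' := fun _ _ => rfl } with hT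
  have Tinj : Function.Injective T := by
    intro M M' h
    funext i j
    have h2 : π (e.symm (i, j)) = (i, j) := e.apply_symm_apply (i, j)
    have h1 : M (π (e.symm (i, j))).1 (π (e.symm (i, j))).2
        = M' (π (e.symm (i, j))).1 (π (e.symm (i, j))).2 := congrFun h (e.symm (i, j))
    rw [h2] at h1
    exact h1
  -- the product code as a submodule of matrices
  set C : Submodule F (Fin na → Fin nb → F) :=
    { carrier := {M | (∀ j, (fun i => M i j) ∈ A) ∧ (∀ i, (fun j => M i j) ∈ B)}
      add_mem' := by
        rintro M M' ⟨hc, hr⟩ ⟨hc', hr'⟩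
        exact ⟨fun j => A.add_mem (hc j) (hc' j), fun i => B.add_mem (hr i) (hr' i)⟩
      zero_mem' := ⟨fun j => A.zero_mem, fun i => B.zero_mem⟩
      smul_mem' := by
        rintro c M ⟨hc, hr⟩
        exact ⟨fun j => A.smul_mem c (hc j), fun i => B.smul_mem c (hr i)⟩ } with hC
  have hCmem : ∀ M : Fin na → Fin nb → F,
      M ∈ C ↔ (∀ j, (fun i => M i j) ∈ A) ∧ (∀ i, (fun j => M i j) ∈ B) := fun _ => Iff.rfl
  refine ⟨C.map T, ?_, ?_, ?_, ?_⟩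
  · -- membership characterization
    intro w
    rw [Submodule.mem_map]
    constructor
    · rintro ⟨M, hM, rfl⟩
      exact ⟨M, ((hCmem M).1 hM).1, ((hCmem M).1 hM).2, fun ℓ => rfl⟩
    · rintro ⟨M, hc, hr, hw⟩
      exact ⟨M, (hCmem M).2 ⟨hc, hr⟩, funext fun ℓ => (hw ℓ).symm⟩
  · -- cyclicity
    rintro w hw
    rw [Submodule.mem_map] at hw ⊢
    obtain ⟨M, hM, rfl⟩ := hw
    obtain ⟨hc, hr⟩ := (hCmem M).1 hM
    refine ⟨fun i j => M (i - 1) (j - 1),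
      (hCmem _).2 ⟨fun j => hAcyc _ (hc (j - 1)), fun i => hBcyc _ (hr (i - 1))⟩, ?_⟩
    funext ℓ
    show M ((π ℓ).1 - 1) ((π ℓ).2 - 1) = M (π (ℓ - 1)).1 (π (ℓ - 1)).2
    have h1 : (π (ℓ - 1)).1 = (π ℓ).1 - 1 := by
      apply Fin.ext
      exact finSubOne (dvd_mul_right na nb) ℓ (π ℓ).1 rfl
    have h2 : (π (ℓ - 1)).2 = (π ℓ).2 - 1 := by
      apply Fin.ext
      exact finSubOne (dvd_mul_left nb na) ℓ (π ℓ).2 rfl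
    rw [h1, h2]
  · -- dimension
    have hrkmap : Module.finrank F (C.map T) = Module.finrank F C :=
      (Submodule.equivMapOfInjective T Tinj C).finrank_eq.symm
    let bA : Module.Basis (Fin ka) F A := Module.finBasisOfFinrankEq F A hAdim
    set u : Fin ka → (Fin na → F) := fun s => (bA s : Fin na → F) with hu
    have hu_mem : ∀ s, u s ∈ A := fun s => (bA s).2
    have hu_li : LinearIndependent F u :=
      bA.linearIndependent.map' A.subtype (Submodule.ker_subtype A)
    set Φ : (Fin ka → B) →ₗ[F] (Fin na → Fin nb → F) :=
      { toFun := fun r i j => ∑ s, u s i * (r s : Fin nb → F) j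
        map_add' := by
          intro r r'
          funext i j
          simp [mul_add, Finset.sum_add_distrib]
        map_smul' := by
          intro c r
          funext i j
          simp only [Pi.smul_apply, Submodule.coe_smul, smul_eq_mul, RingHom.id_apply]
          rw [Finset.mul_sum]
          exact Finset.sum_congr rfl fun s _ => by ring } with hΦ
    have Φinj : Function.Injective Φ := by
      rw [← LinearMap.ker_eq_bot, LinearMap.ker_eq_bot']
      intro r hr
      funext s
      apply Subtype.ext
      funext j
      have hz : ∀ i, ∑ t, ((r t : Fin nb → F) j) • u t i = 0 := by
        intro i
        have := congrFun (congrFun hr i) j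
        simpa [hΦ, mul_comm, smul_eq_mul] using this
      have hz' : ∑ t, ((r t : Fin nb → F) j) • u t = (0 : Fin na → F) := by
        funext i
        rw [Finset.sum_apply]
        simpa using hz i
      exact Fintype.linearIndependent_iff.1 hu_li _ hz' s
    have hrange : LinearMap.range Φ = C := by
      apply le_antisymm
      · rintro _ ⟨r, rfl⟩
        refine (hCmem _).2 ⟨fun j => ?_, fun i => ?_⟩
        · have hcol : (fun i => Φ r i j) = ∑ s, ((r s : Fin nb → F) j) • u s := by
            funext i
            rw [Finset.sum_apply]
            simp [hΦ, mul_comm, smul_eq_mul]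
          rw [hcol]
          exact Submodule.sum_mem _ fun s _ => A.smul_mem _ (hu_mem s)
        · have hrow : (fun j => Φ r i j) = ∑ s, (u s i) • ((r s : Fin nb → F)) := by
            funext j
            rw [Finset.sum_apply]
            simp [hΦ]
          rw [hrow]
          exact Submodule.sum_mem _ fun s _ => B.smul_mem _ (r s).2
      · intro M hM
        obtain ⟨hc, hr⟩ := (hCmem M).1 hM
        have hcol : ∀ j, ∃ c : Fin ka → F, ∀ i, M i j = ∑ s, c s * u s i := by
          intro j
          refine ⟨fun s => bA.repr ⟨fun i => M i j, hc j⟩ s, fun i => ?_⟩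
          have h1 := congrArg (fun v : A => (v : Fin na → F) i)
            (bA.sum_repr ⟨fun i => M i j, hc j⟩)
          simp only at h1
          rw [← h1]
          rw [show ((∑ s, bA.repr ⟨fun i => M i j, hc j⟩ s • bA s : A) : Fin na → F)
              = ∑ s, ((bA.repr ⟨fun i => M i j, hc j⟩ s • bA s : A) : Fin na → F) from
            AddSubmonoidClass.coe_finset_sum _ _, Finset.sum_apply]
          exact Finset.sum_congr rfl fun s _ => by
            simp [hu, smul_eq_mul]
        choose c hc2 using hcol
        have hdual : ∀ t, ∃ g : (Fin na → F) →ₗ[F] F,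
            ∀ s, g (u s) = if s = t then 1 else 0 := by
          intro t
          set bS : Module.Basis (Fin ka) F (Submodule.span F (Set.range u)) := Module.Basis.span hu_li
          obtain ⟨g, hg⟩ := LinearMap.exists_extend (bS.coord t)
          refine ⟨g, fun s => ?_⟩
          calc g (u s) = (g ∘ₗ (Submodule.span F (Set.range u)).subtype) (bS s) := by
                rw [LinearMap.comp_apply]
                congr 1
                exact congrArg Subtype.val (Module.Basis.span_apply hu_li s).symm
            _ = bS.coord t (bS s) := by rw [hg]
            _ = if s = t then 1 else 0 := by
                rw [Module.Basis.coord_apply, Module.Basis.repr_self]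
                exact Finsupp.single_apply
        choose g hg using hdual
        have hgc : ∀ t j, g t (fun i => M i j) = c j t := by
          intro t j
          have hco : (fun i => M i j) = ∑ s, c j s • u s := by
            funext i
            rw [Finset.sum_apply]
            simpa [smul_eq_mul] using hc2 j i
          rw [hco, map_sum]
          simp only [map_smul, hg, smul_eq_mul, mul_ite, mul_one, mul_zero]
          simp
        have hrB : ∀ t, (fun j => g t fun i => M i j) ∈ B := by
          intro t
          have hkey : (fun j => g t fun i => M i j)
              = ∑ i, (g t fun i' => if i = i' then (1:F) else 0) • (fun j => M i j) := by
            funext j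
            rw [Finset.sum_apply]
            have hx : (fun i => M i j) = ∑ i, M i j • fun i' => if i = i' then (1:F) else 0 :=
              pi_eq_sum_univ _
            calc g t (fun i => M i j)
                = g t (∑ i, M i j • fun i' => if i = i' then (1:F) else 0) := by rw [← hx]
              _ = ∑ i, M i j • g t (fun i' => if i = i' then (1:F) else 0) := by
                  rw [map_sum]; simp
              _ = ∑ i, ((g t fun i' => if i = i' then (1:F) else 0) • fun j' => M i j') j := by
                  refine Finset.sum_congr rfl fun i _ => ?_
                  simp [smul_eq_mul, mul_comm]
          rw [hkey]
          exact Submodule.sum_mem _ fun i _ => B.smul_mem _ (hr i)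
        refine ⟨fun t => ⟨fun j => g t fun i => M i j, hrB t⟩, ?_⟩
        funext i j
        show ∑ s, u s i * (g s fun i' => M i' j) = M i j
        simp only [hgc]
        rw [hc2 j i]
        exact Finset.sum_congr rfl fun s _ => mul_comm _ _
    have hCrk : Module.finrank F C = ka * kb := by
      rw [← hrange, LinearMap.finrank_range_of_inj Φinj, Module.finrank_pi_fintype]
      simp [hBdim, Finset.sum_const, mul_comm]
    rw [hrkmap, hCrk]
  · -- minimum distance
    have hwt : ∀ (w : Fin (na * nb) → F) (M : Fin na → Fin nb → F),
        (∀ ℓ, w ℓ = M (π ℓ).1 (π ℓ).2) →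
        hammingNorm w = ∑ j, hammingNorm (fun i => M i j) := by
      intro w M hwM
      calc hammingNorm w = ∑ ℓ : Fin (na * nb), if w ℓ ≠ 0 then 1 else 0 :=
            Finset.card_filter _ _
        _ = ∑ p : Fin na × Fin nb, if M p.1 p.2 ≠ 0 then 1 else 0 :=
            Fintype.sum_equiv e _ _ (fun ℓ => by rw [hwM ℓ]; rfl)
        _ = ∑ j, ∑ i, if M i j ≠ 0 then 1 else 0 := Fintype.sum_prod_type_right _
        _ = ∑ j, hammingNorm (fun i => M i j) :=
            Finset.sum_congr rfl fun j _ => (Finset.card_filter _ _).symm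
    constructor
    · -- da * db is attained
      obtain ⟨a, haA, ha0, hada⟩ := hAdist.1
      obtain ⟨b, hbB, hb0, hbdb⟩ := hBdist.1
      set M0 : Fin na → Fin nb → F := fun i j => a i * b j with hM0
      have hM0C : M0 ∈ C := by
        refine (hCmem _).2 ⟨fun j => ?_, fun i => ?_⟩
        · have : (fun i => M0 i j) = b j • a := by
            funext i; simp [hM0, smul_eq_mul, mul_comm]
          rw [this]; exact A.smul_mem _ haA
        · have : (fun j => M0 i j) = a i • b := by
            funext j; simp [hM0, smul_eq_mul]
          rw [this]; exact B.smul_mem _ hbB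
      obtain ⟨i0, hi0⟩ := Function.ne_iff.1 ha0
      obtain ⟨j0, hj0⟩ := Function.ne_iff.1 hb0
      refine ⟨T M0, ⟨M0, hM0C, rfl⟩, ?_, ?_⟩
      · intro h0
        have h2 : π (e.symm (i0, j0)) = (i0, j0) := e.apply_symm_apply (i0, j0)
        have h1 : M0 (π (e.symm (i0, j0))).1 (π (e.symm (i0, j0))).2 = 0 :=
          congrFun h0 (e.symm (i0, j0))
        rw [h2] at h1
        exact (mul_ne_zero hi0 hj0) h1
      · rw [hwt (T M0) M0 (fun ℓ => rfl)]
        have hnorm : ∀ j, hammingNorm (fun i => M0 i j)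
            = if b j ≠ 0 then hammingNorm a else 0 := by
          intro j
          by_cases hbj : b j = 0
          · simp [hM0, hbj, hammingNorm]
          · simp only [hbj, ne_eq, not_false_eq_true, if_true]
            unfold hammingNorm
            congr 1
            apply Finset.filter_congr
            intro i _
            simp [hM0, hbj]
        calc (da * db : ℕ) = hammingNorm a * hammingNorm b := by rw [← hada, ← hbdb]
          _ = ∑ j, if b j ≠ 0 then hammingNorm a else 0 := by
              rw [Finset.sum_ite, Finset.sum_const, Finset.sum_const]
              simp [hammingNorm, mul_comm]
          _ = ∑ j, hammingNorm (fun i => M0 i j) :=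
              Finset.sum_congr rfl fun j _ => (hnorm j).symm
    · -- lower bound
      rintro x ⟨w, hwP, hw0, rfl⟩
      rw [Submodule.mem_map] at hwP
      obtain ⟨M, hM, rfl⟩ := hwP
      obtain ⟨hc, hr⟩ := (hCmem M).1 hM
      rw [hwt (T M) M (fun ℓ => rfl)]
      have hM0 : ∃ i, (fun j => M i j) ≠ (0 : Fin nb → F) := by
        by_contra h
        push_neg at h
        apply hw0
        funext ℓ
        show M (π ℓ).1 (π ℓ).2 = 0
        have := congrFun (h (π ℓ).1) (π ℓ).2
        simpa using this
      obtain ⟨i0, hi0⟩ := hM0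
      have hrow_db : db ≤ hammingNorm (fun j => M i0 j) := hBdist.2 ⟨_, hr i0, hi0, rfl⟩
      classical
      set S : Finset (Fin nb) := Finset.univ.filter (fun j => M i0 j ≠ 0) with hS
      have hScard : hammingNorm (fun j => M i0 j) = S.card := rfl
      have hcols : ∀ j ∈ S, da ≤ hammingNorm (fun i => M i j) := by
        intro j hj
        rw [hS, Finset.mem_filter] at hj
        have hjne : (fun i => M i j) ≠ (0 : Fin na → F) := by
          intro h0
          exact hj.2 (congrFun h0 i0)
        exact hAdist.2 ⟨_, hc j, hjne, rfl⟩
      calc da * db ≤ da * S.card := Nat.mul_le_mul_left da (hScard ▸ hrow_db)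
        _ = ∑ _j ∈ S, da := by rw [Finset.sum_const, smul_eq_mul, mul_comm]
        _ ≤ ∑ j ∈ S, hammingNorm (fun i => M i j) := Finset.sum_le_sum hcols
        _ ≤ ∑ j, hammingNorm (fun i => M i j) :=
            Finset.sum_le_sum_of_subset (Finset.filter_subset _ _)
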